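/- arXiv:1107.1480 — 2 statements merged into one kernel-verified Lean document; each statement's English description precedes it below -/
import Mathlib

section
/- For every n and every word ω ∈ Ω_{n+1}, one has φ_n(ω)' = φ_n(ω')'; that is, projecting a word and then reducing gives the same result as first reducing the word, then projecting, then reducing. -/
open Classical
noncomputable section

namespace GCG

/-- One-step backtrack reduction of a word: replace some substring `u v u` by `u`. -/
def ReduceStep {V : Type*} (l r : List V) : Prop :=
  ∃ (p s : List V) (u v : V), l = p ++ [u, v, u] ++ s ∧ r = p ++ [u] ++ s

/-- A word is reduced if it admits no one-step reduction. -/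
def IsReduced {V : Type*} (l : List V) : Prop := ∀ r, ¬ ReduceStep l r

/-- The reduction `ω'` of a word: the (for words in a simple graph, unique) reduced
word obtained from it by repeatedly replacing substrings `u v u` by `u`. -/
def reduce {V : Type*} (l : List V) : List V :=
  if h : ∃ r, Relation.ReflTransGen ReduceStep l r ∧ IsReduced r then h.choose else l

/-- Compress every maximal constant substring `u u ⋯ u` to the single letter `u`. -/
def compress {V : Type*} : List V → List V
  | [] => []
  | [a] => [a]
  | a :: b :: t => if a = b then compress (b :: t) else a :: compress (b :: t)

/-- Delete–Replace–Compress along `f`: delete the letters sent into `S`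
(the subdivision points), replace the remaining letters by their images,
and compress maximal constant substrings. -/
def DRC {V' V S : Type*} (f : V' → V ⊕ S) (w : List V') : List V :=
  compress (w.filterMap fun v => (f v).getLeft?)

/-- A word in a simple graph: a finite list of vertices in which consecutive
letters are distinct and joined by an edge. -/
def IsWord {V : Type*} (G : SimpleGraph V) (l : List V) : Prop := l.Chain' G.Adj

/-- A loop word at `x`: a word that starts and ends with `x`. -/
def IsLoopWord {V : Type*} (G : SimpleGraph V) (x : V) (l : List V) : Prop :=
  l.Chain' G.Adj ∧ l.head? = some x ∧ l.getLast? = some x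

/-- Concatenation of loop words: the duplicated base letter is dropped. -/
def lconcat {V : Type*} (ω ξ : List V) : List V := ω.dropLast ++ ξ

/-- `Gs` (on vertex set `V ⊕ S`) is the subdivision of `G` in which every edge is
evenly subdivided into `d` edges: every edge of `G` is replaced by a path of
length `d` through fresh interior vertices from `S`, these paths are compatible
with edge reversal, their interiors are pairwise disjoint, they exhaust `S`, and
their steps are exactly the edges of `Gs`. -/
def IsEvenSubdivision {V S : Type*} (G : SimpleGraph V) (d : ℕ)
    (Gs : SimpleGraph (V ⊕ S)) : Prop :=
  ∃ P : G.Dart → Fin (d + 1) → V ⊕ S,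
    (∀ e, P e 0 = Sum.inl e.toProd.1) ∧
    (∀ e, P e (Fin.last d) = Sum.inl e.toProd.2) ∧
    (∀ e (i : Fin (d + 1)), 0 < i.val → i.val < d → ∃ s : S, P e i = Sum.inr s) ∧
    (∀ e, Function.Injective (P e)) ∧
    (∀ e (i : Fin (d + 1)), P e.symm i = P e i.rev) ∧
    (∀ s : S, ∃ e i, P e i = Sum.inr s) ∧
    (∀ e e' (i i' : Fin (d + 1)), 0 < i.val → i.val < d → P e i = P e' i' →
      (e' = e ∧ i' = i) ∨ (e' = e.symm ∧ i' = i.rev)) ∧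
    (∀ a b, Gs.Adj a b ↔ ∃ e, ∃ i : Fin d, P e i.castSucc = a ∧ P e i.succ = b)

/-- The inverse sequence of finite connected simple graphs `X_n` with even
subdivisions `X*_n` and simplicial bonding surjections `f_n : X_{n+1} → X*_n`
mapping every edge onto an edge, together with coherent base vertices `x_n`. -/
structure GraphTower where
  V : ℕ → Type
  S : ℕ → Type
  finV : ∀ n, Finite (V n)
  G : ∀ n, SimpleGraph (V n)
  conn : ∀ n, (G n).Connected
  d : ℕ → ℕ
  two_le_d : ∀ n, 2 ≤ d n
  Gs : ∀ n, SimpleGraph (V n ⊕ S n)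
  subdiv : ∀ n, IsEvenSubdivision (G n) (d n) (Gs n)
  f : ∀ n, V (n + 1) → V n ⊕ S n
  f_surj : ∀ n, Function.Surjective (f n)
  f_simplicial : ∀ n ⦃u v⦄, (G (n + 1)).Adj u v → (Gs n).Adj (f n u) (f n v)
  f_edge_surj : ∀ n ⦃a b⦄, (Gs n).Adj a b →
    ∃ u v, (G (n + 1)).Adj u v ∧ f n u = a ∧ f n v = b
  x : ∀ n, V n
  f_base : ∀ n, f n (x (n + 1)) = Sum.inl (x n)

namespace GraphTower

/-- The projection `φ_n = DRC_n`. -/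
def phi (T : GraphTower) (n : ℕ) : List (T.V (n + 1)) → List (T.V n) := DRC (T.f n)

/-- The composite projection `φ_n ∘ φ_{n+1} ∘ ⋯ ∘ φ_{n+m-1}` (the identity for `m = 0`). -/
def proj (T : GraphTower) (n : ℕ) : (m : ℕ) → List (T.V (n + m)) → List (T.V n)
  | 0, w => w
  | m + 1, w => T.proj n m (T.phi (n + m) w)

/-- Membership in `Ω = lim←(Ω_n, φ_n)`: a coherent sequence of loop words. -/
def MemOmega (T : GraphTower) (ω : ∀ n, List (T.V n)) : Prop :=
  (∀ n, IsLoopWord (T.G n) (T.x n) (ω n)) ∧ ∀ n, T.phi n (ω (n + 1)) = ω n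

/-- Membership in `G = lim←(Ω'_n, φ'_n)`: a `φ'`-coherent sequence of reduced loop words. -/
def MemG (T : GraphTower) (g : ∀ n, List (T.V n)) : Prop :=
  (∀ n, IsLoopWord (T.G n) (T.x n) (g n) ∧ IsReduced (g n)) ∧
    ∀ n, reduce (T.phi n (g (n + 1))) = g n

/-- A sequence is locally eventually constant if for every fixed level `n` the
unreduced projections of its later terms to level `n` are eventually constant. -/
def LEC (T : GraphTower) (g : ∀ n, List (T.V n)) : Prop :=
  ∀ n, ∃ M, ∀ m, M ≤ m → T.proj n m (g (n + m)) = T.proj n M (g (n + M))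

/-- `ω` is the stabilization `←g` of `g`: for every level `n`, the projections of
the later terms of `g` to level `n` eventually equal `ω n`. -/
def IsStabilization (T : GraphTower) (g ω : ∀ n, List (T.V n)) : Prop :=
  ∀ n, ∃ M, ∀ m, M ≤ m → T.proj n m (g (n + m)) = ω n

/-- The identity word sequence `(x_n)_n`. -/
def seqOne (T : GraphTower) : ∀ n, List (T.V n) := fun n => [T.x n]

/-- Termwise concatenation followed by termwise reduction. -/
def seqMul (T : GraphTower) (g h : ∀ n, List (T.V n)) : ∀ n, List (T.V n) :=
  fun n => reduce (lconcat (g n) (h n))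

/-- Termwise reversal. -/
def seqInv (T : GraphTower) (g : ∀ n, List (T.V n)) : ∀ n, List (T.V n) :=
  fun n => (g n).reverse

/-- Membership in `←𝒢`: the stabilization of some locally eventually constant
element of `G`. -/
def MemSG (T : GraphTower) (ω : ∀ n, List (T.V n)) : Prop :=
  ∃ g, T.MemG g ∧ T.LEC g ∧ T.IsStabilization g ω

/-- `τ = ω ∗ ξ`: termwise concatenation, followed by termwise reduction,
followed by stabilization. -/
def star (T : GraphTower) (ω ξ τ : ∀ n, List (T.V n)) : Prop :=
  T.IsStabilization (fun n => reduce (lconcat (ω n) (ξ n))) τ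

end GraphTower

end GCG

namespace GCG

theorem ReduceStep.length_lt {l r : List V} (h : ReduceStep l r) : r.length < l.length := by
  obtain ⟨p, s, u, v, rfl, rfl⟩ := h
  simp [List.length_append]

theorem exists_reduced (l : List V) :
    ∃ r, Relation.ReflTransGen ReduceStep l r ∧ IsReduced r := by
  by_cases h : IsReduced l
  · exact ⟨l, .refl, h⟩
  · simp only [IsReduced, not_forall, not_not] at h
    obtain ⟨r, hr⟩ := h
    obtain ⟨m, hm1, hm2⟩ := exists_reduced r
    exact ⟨m, .head hr hm1, hm2⟩
termination_by l.length
decreasing_by exact hr.length_lt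

theorem reduce_spec (l : List V) :
    Relation.ReflTransGen ReduceStep l (reduce l) ∧ IsReduced (reduce l) := by
  rw [reduce, dif_pos (exists_reduced l)]
  exact (exists_reduced l).choose_spec

theorem diamond_le {p₁ s₁ p₂ s₂ : List V} {u₁ v₁ u₂ v₂ : V}
    (hl : p₁ ++ [u₁, v₁, u₁] ++ s₁ = p₂ ++ [u₂, v₂, u₂] ++ s₂)
    (hlen : p₁.length ≤ p₂.length) :
    ∃ d, Relation.ReflGen ReduceStep (p₁ ++ [u₁] ++ s₁) d ∧
         Relation.ReflGen ReduceStep (p₂ ++ [u₂] ++ s₂) d := by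
  have hpre : p₁ <+: p₂ := by
    refine List.prefix_of_prefix_length_le ⟨[u₁,v₁,u₁] ++ s₁, ?_⟩
      ⟨[u₂,v₂,u₂] ++ s₂, by rw [← List.append_assoc]⟩ hlen
    rw [← List.append_assoc]; exact hl
  obtain ⟨q, rfl⟩ := hpre
  have hq : [u₁,v₁,u₁] ++ s₁ = q ++ ([u₂,v₂,u₂] ++ s₂) := by
    apply List.append_cancel_left (as := p₁)
    simpa [List.append_assoc] using hl
  rcases q with _ | ⟨α, _ | ⟨β, _ | ⟨γ, q'⟩⟩⟩ <;>
    simp only [List.cons_append, List.nil_append, List.cons.injEq] at hq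
  · obtain ⟨rfl, rfl, -, rfl⟩ := hq
    refine ⟨_, .refl, ?_⟩
    simp only [List.append_nil, List.append_assoc, List.cons_append, List.nil_append]
    exact .refl
  · obtain ⟨rfl, rfl, rfl, rfl⟩ := hq
    refine ⟨_, .refl, ?_⟩
    simp only [List.append_assoc, List.cons_append, List.nil_append]
    exact .refl
  · obtain ⟨rfl, rfl, rfl, rfl⟩ := hq
    refine ⟨p₁ ++ [u₁] ++ s₂, .single ⟨p₁, s₂, u₁, v₂, by simp, rfl⟩,
      .single ⟨p₁, s₂, u₁, v₁, by simp, by simp⟩⟩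
  · obtain ⟨rfl, rfl, rfl, rfl⟩ := hq
    refine ⟨p₁ ++ [u₁] ++ (q' ++ [u₂] ++ s₂),
      .single ⟨p₁ ++ [u₁] ++ q', s₂, u₂, v₂, by simp, by simp⟩,
      .single ⟨p₁, q' ++ [u₂] ++ s₂, u₁, v₁, by simp, by simp⟩⟩
theorem diamond {l r₁ r₂ : List V} (h₁ : ReduceStep l r₁) (h₂ : ReduceStep l r₂) :
    ∃ d, Relation.ReflGen ReduceStep r₁ d ∧ Relation.ReflGen ReduceStep r₂ d := by
  obtain ⟨p₁, s₁, u₁, v₁, rfl, rfl⟩ := h₁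
  obtain ⟨p₂, s₂, u₂, v₂, hl, rfl⟩ := h₂
  rcases le_total p₁.length p₂.length with h | h
  · exact diamond_le hl h
  · obtain ⟨d, h2, h1⟩ := diamond_le hl.symm h
    exact ⟨d, h1, h2⟩

theorem eq_of_reduced_rtg {a b : List V} (ha : IsReduced a)
    (h : Relation.ReflTransGen ReduceStep a b) : a = b := by
  rcases h.cases_head with rfl | ⟨c, hc, -⟩
  · rfl
  · exact absurd hc (ha c)

theorem reduce_eq_of_rtg {l r : List V} (h : Relation.ReflTransGen ReduceStep l r) :
    reduce l = reduce r := by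
  have hl := reduce_spec l
  have hr := reduce_spec r
  have hj : Relation.Join (Relation.ReflTransGen ReduceStep) (reduce l) (reduce r) :=
    Relation.church_rosser
      (fun a b c hab hac => by
        obtain ⟨d, h1, h2⟩ := diamond hab hac
        exact ⟨d, h1, h2.to_reflTransGen⟩)
      hl.1 (h.trans hr.1)
  obtain ⟨m, h1, h2⟩ := hj
  rw [eq_of_reduced_rtg hl.2 h1, eq_of_reduced_rtg hr.2 h2]


theorem compress_cons₂ (a b : V) (t : List V) :
    compress (a :: b :: t) = if a = b then compress (b :: t) else a :: compress (b :: t) := rfl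

theorem compress_singleton (a : V) : compress [a] = ([a] : List V) := rfl

theorem compress_nil : compress ([] : List V) = [] := rfl

theorem compress_cons (a : V) (t : List V) : ∃ T, compress (a :: t) = a :: T := by
  induction t generalizing a with
  | nil => exact ⟨[], rfl⟩
  | cons b t ih =>
    rw [compress_cons₂]
    split
    · next h => subst h; exact ih _
    · exact ⟨_, rfl⟩

theorem compress_cons_self (a : V) (t : List V) : compress (a :: a :: t) = compress (a :: t) := by
  rw [compress_cons₂, if_pos rfl]

theorem compress_cons_ne {a b : V} (h : a ≠ b) (t : List V) :
    compress (a :: b :: t) = a :: compress (b :: t) := by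
  rw [compress_cons₂, if_neg h]

theorem compress_seam (L M : List V) (a : V) :
    compress (L ++ a :: M) = compress (L ++ [a]) ++ (compress (a :: M)).tail := by
  induction L with
  | nil =>
    obtain ⟨T, hT⟩ := compress_cons a M
    simp [hT, compress_singleton]
  | cons b L ih =>
    cases L with
    | nil =>
      obtain ⟨T, hT⟩ := compress_cons a M
      by_cases h : b = a
      · subst h
        simp only [List.nil_append, List.cons_append, compress_cons_self, hT]
        rfl
      · simp only [List.nil_append, List.cons_append, compress_cons_ne h, hT]
        rfl
    | cons c L' =>
      by_cases h : b = c
      · subst h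
        simpa only [List.cons_append, compress_cons_self] using ih
      · simp only [List.cons_append, compress_cons_ne h] at *
        rw [ih]

theorem compress_concat (L : List V) (a : V) : ∃ K, compress (L ++ [a]) = K ++ [a] := by
  induction L with
  | nil => exact ⟨[], rfl⟩
  | cons b L ih =>
    cases L with
    | nil =>
      by_cases h : b = a
      · subst h; exact ⟨[], by simp [compress_cons_self, compress_singleton]⟩
      · exact ⟨[b], by simp [compress_cons_ne h, compress_singleton]⟩
    | cons c L' =>
      obtain ⟨K, hK⟩ := ih
      by_cases h : b = c
      · subst h
        exact ⟨K, by simpa only [List.cons_append, compress_cons_self] using hK⟩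
      · refine ⟨b :: K, ?_⟩
        have hK' : compress (c :: (L' ++ [a])) = K ++ [a] := by
          rw [← List.cons_append]; exact hK
        rw [List.cons_append, List.cons_append, compress_cons_ne h, hK', List.cons_append]

theorem compress_dd (L R : List V) (a : V) :
    compress (L ++ a :: a :: R) = compress (L ++ a :: R) := by
  rw [show L ++ a :: a :: R = L ++ a :: (a :: R) from rfl, compress_seam,
    compress_cons_self, ← compress_seam]

theorem exists_last_some {g : V' → Option V} {p : List V'} (h : p.filterMap g ≠ []) :
    ∃ p₁ a₀ p₂ a, p = p₁ ++ a₀ :: p₂ ∧ g a₀ = some a ∧ (∀ z ∈ p₂, g z = none) ∧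
      p.filterMap g = p₁.filterMap g ++ [a] := by
  induction p using List.reverseRecOn with
  | nil => simp at h
  | append_singleton q z ih =>
    cases hz : g z with
    | some a =>
      exact ⟨q, z, [], a, by simp, hz, by simp,
        by simp [List.filterMap_append, List.filterMap_cons, hz]⟩
    | none =>
      have h' : q.filterMap g ≠ [] := by
        simpa [List.filterMap_append, hz] using h
      obtain ⟨p₁, a₀, p₂, a, rfl, h1, h2, h3⟩ := ih h'
      refine ⟨p₁, a₀, p₂ ++ [z], a, by simp, h1, ?_,
        by simp [List.filterMap_append, List.filterMap_cons, hz, h1,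
          List.filterMap_eq_nil_iff.2 h2]⟩
      intro w hw
      rcases List.mem_append.1 hw with h | h
      · exact h2 w h
      · simp only [List.mem_singleton] at h; subst h; exact hz

theorem exists_head_some {g : V' → Option V} {p : List V'} (h : p.filterMap g ≠ []) :
    ∃ p₁ a₀ p₂ a, p = p₁ ++ a₀ :: p₂ ∧ g a₀ = some a ∧ (∀ z ∈ p₁, g z = none) ∧
      p.filterMap g = a :: p₂.filterMap g := by
  induction p with
  | nil => simp at h
  | cons z q ih =>
    cases hz : g z with
    | some a =>
      exact ⟨[], z, q, a, rfl, hz, by simp, by simp [List.filterMap_cons, hz]⟩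
    | none =>
      obtain ⟨p₁, a₀, p₂, a, rfl, h1, h2, h3⟩ := ih (by simpa [List.filterMap_cons, hz] using h)
      refine ⟨z :: p₁, a₀, p₂, a, rfl, h1, ?_, by simp [List.filterMap_cons, hz, h3]⟩
      intro w hw
      rcases List.mem_cons.1 hw with h | h
      · subst h; exact hz
      · exact h2 w h

section Geometry

variable {W : Type*} {G : SimpleGraph W} {d : ℕ} {Gs : SimpleGraph (W ⊕ S)}
variable {P : G.Dart → Fin (d + 1) → W ⊕ S}

theorem inl_endpoint (h0 : ∀ e, P e 0 = Sum.inl e.toProd.1)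
    (hd : ∀ e, P e (Fin.last d) = Sum.inl e.toProd.2)
    (hint : ∀ e (i : Fin (d + 1)), 0 < i.val → i.val < d → ∃ s : S, P e i = Sum.inr s)
    {e : G.Dart} {j : Fin (d + 1)} {c : W} (h : P e j = Sum.inl c) :
    c = e.toProd.1 ∨ c = e.toProd.2 := by
  by_cases hj0 : j.val = 0
  · left
    have hj : j = 0 := Fin.ext (by simp [hj0])
    subst hj
    exact (Sum.inl_injective ((h0 e).symm.trans h)).symm
  · by_cases hjd : j.val = d
    · right
      have hj : j = Fin.last d := Fin.ext (by simp [hjd])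
      subst hj
      exact (Sum.inl_injective ((hd e).symm.trans h)).symm
    · exfalso
      have hlt := j.isLt
      obtain ⟨s, hs⟩ := hint e j (by omega) (by omega)
      rw [hs] at h
      cases h


theorem idx_of_inl
    (hint : ∀ e (i : Fin (d + 1)), 0 < i.val → i.val < d → ∃ s : S, P e i = Sum.inr s)
    {e : G.Dart} {j : Fin (d + 1)} {c : W} (h : P e j = Sum.inl c) :
    j.val = 0 ∨ j.val = d := by
  by_contra hcon
  push_neg at hcon
  have hlt := j.isLt
  obtain ⟨s, hs⟩ := hint e j (by omega) (by omega)
  rw [hs] at h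
  cases h

theorem not_adj_inl_inl
    (hint : ∀ e (i : Fin (d + 1)), 0 < i.val → i.val < d → ∃ s : S, P e i = Sum.inr s)
    (hadj : ∀ a b, Gs.Adj a b ↔ ∃ e, ∃ i : Fin d, P e i.castSucc = a ∧ P e i.succ = b)
    (h2d : 2 ≤ d) {a b : W} (h : Gs.Adj (Sum.inl a) (Sum.inl b)) : False := by
  rw [hadj] at h
  obtain ⟨e, k, hk1, hk2⟩ := h
  have h1 := idx_of_inl hint hk1
  have h2 := idx_of_inl hint hk2
  have hklt := k.isLt
  simp only [Fin.coe_castSucc, Fin.val_succ] at h1 h2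
  omega

theorem nbhd
    (h5 : ∀ e (i : Fin (d + 1)), P e.symm i = P e i.rev)
    (h7 : ∀ e e' (i i' : Fin (d + 1)), 0 < i.val → i.val < d → P e i = P e' i' →
      (e' = e ∧ i' = i) ∨ (e' = e.symm ∧ i' = i.rev))
    (hadj : ∀ a b, Gs.Adj a b ↔ ∃ e, ∃ i : Fin d, P e i.castSucc = a ∧ P e i.succ = b)
    {e : G.Dart} {i : Fin (d + 1)} (hi0 : 0 < i.val) (hid : i.val < d)
    {b : W ⊕ S} (hb : Gs.Adj (P e i) b) : ∃ j, b = P e j := by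
  rw [hadj] at hb
  obtain ⟨e₂, k, hk1, hk2⟩ := hb
  rcases h7 e e₂ i k.castSucc hi0 hid hk1.symm with ⟨rfl, -⟩ | ⟨rfl, -⟩
  · exact ⟨k.succ, hk2.symm⟩
  · refine ⟨k.succ.rev, ?_⟩
    rw [← hk2]
    exact h5 e k.succ

theorem interior_of_inr
    (h0 : ∀ e, P e 0 = Sum.inl e.toProd.1)
    (hd : ∀ e, P e (Fin.last d) = Sum.inl e.toProd.2)
    (hsurj : ∀ s : S, ∃ e i, P e i = Sum.inr s) (s : S) :
    ∃ e, ∃ i : Fin (d + 1), P e i = Sum.inr s ∧ 0 < i.val ∧ i.val < d := by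
  obtain ⟨e, i, hi⟩ := hsurj s
  have h1 : i.val ≠ 0 := by
    intro h
    have hj : i = 0 := Fin.ext (by simp [h])
    rw [hj, h0] at hi
    cases hi
  have h2 : i.val ≠ d := by
    intro h
    have hj : i = Fin.last d := Fin.ext (by simp [h])
    rw [hj, hd] at hi
    cases hi
  have hlt := i.isLt
  exact ⟨e, i, hi, by omega, by omega⟩

theorem corridor
    (h0 : ∀ e, P e 0 = Sum.inl e.toProd.1)
    (hd : ∀ e, P e (Fin.last d) = Sum.inl e.toProd.2)
    (hint : ∀ e (i : Fin (d + 1)), 0 < i.val → i.val < d → ∃ s : S, P e i = Sum.inr s)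
    (h5 : ∀ e (i : Fin (d + 1)), P e.symm i = P e i.rev)
    (h7 : ∀ e e' (i i' : Fin (d + 1)), 0 < i.val → i.val < d → P e i = P e' i' →
      (e' = e ∧ i' = i) ∨ (e' = e.symm ∧ i' = i.rev))
    (hadj : ∀ a b, Gs.Adj a b ↔ ∃ e, ∃ i : Fin d, P e i.castSucc = a ∧ P e i.succ = b) :
    ∀ (ms : List (W ⊕ S)) (e : G.Dart) (i : Fin (d + 1)), 0 < i.val → i.val < d →
      ∀ c : W, List.Chain' Gs.Adj (P e i :: (ms ++ [Sum.inl c])) →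
      (∀ z ∈ ms, ∃ t : S, z = Sum.inr t) →
      c = e.toProd.1 ∨ c = e.toProd.2 := by
  intro ms
  induction ms with
  | nil =>
    intro e i hi0 hid c hch _
    have hadj' : Gs.Adj (P e i) (Sum.inl c) := by
      exact List.isChain_pair.mp hch
    obtain ⟨j, hj⟩ := nbhd h5 h7 hadj hi0 hid hadj'
    exact inl_endpoint h0 hd hint (e := e) (j := j) hj.symm
  | cons z ms ih =>
    intro e i hi0 hid c hch hms
    rw [List.Chain', List.cons_append, List.isChain_cons_cons] at hch
    obtain ⟨h1, hch⟩ := hch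
    obtain ⟨t, rfl⟩ := hms z (List.mem_cons_self)
    obtain ⟨j, hj⟩ := nbhd h5 h7 hadj hi0 hid h1
    have hj' : P e j = Sum.inr t := hj.symm
    have hne0 : j.val ≠ 0 := by
      intro h
      have hjj : j = 0 := Fin.ext (by simp [h])
      rw [hjj, h0] at hj'
      cases hj'
    have hned : j.val ≠ d := by
      intro h
      have hjj : j = Fin.last d := Fin.ext (by simp [h])
      rw [hjj, hd] at hj'
      cases hj'
    have hlt := j.isLt
    rw [hj] at hch
    exact ih e j (by omega) (by omega) c hch
      (fun w hw => hms w (List.mem_cons_of_mem _ hw))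



end Geometry

section MainAux
variable {V : Type*}

theorem IsLoopWord.of_step {G : SimpleGraph V} {x : V} {l r : List V}
    (hl : IsLoopWord G x l) (h : ReduceStep l r) : IsLoopWord G x r := by
  obtain ⟨p, s, u, v, rfl, rfl⟩ := h
  obtain ⟨hc, hh, hg⟩ := hl
  refine ⟨?_, ?_, ?_⟩
  · rw [List.Chain', List.append_assoc, List.isChain_append] at hc ⊢
    obtain ⟨h1, h2, h3⟩ := hc
    refine ⟨h1, ?_, ?_⟩
    · simp only [List.cons_append, List.nil_append] at h2 ⊢
      exact h2.tail.tail
    · intro a ha b hb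
      rw [List.cons_append, List.head?_cons, Option.mem_def, Option.some_inj] at hb
      subst hb
      exact h3 a ha u (by simp)
  · cases p with
    | nil => simpa using hh
    | cons z p' => simpa using hh
  · cases s with
    | nil =>
      simp only [List.append_nil] at hg ⊢
      rw [show p ++ [u, v, u] = (p ++ [u, v]) ++ [u] by simp, List.getLast?_concat] at hg
      rw [List.getLast?_concat]
      exact hg
    | cons z s' =>
      rw [List.getLast?_append_of_ne_nil _ (by simp)] at hg ⊢
      exact hg

theorem loopword_rtg {G : SimpleGraph V} {x : V} {l r : List V}
    (hl : IsLoopWord G x l) (h : Relation.ReflTransGen ReduceStep l r) : IsLoopWord G x r := by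
  induction h with
  | refl => exact hl
  | tail _ hstep ih => exact ih.of_step hstep

end MainAux

theorem step_proj (T : GraphTower) (n : ℕ) {l r : List (T.V (n + 1))}
    (hl : IsLoopWord (T.G (n + 1)) (T.x (n + 1)) l) (h : ReduceStep l r) :
    reduce (T.phi n l) = reduce (T.phi n r) := by
  obtain ⟨P, h0, hd, hint, hinj, h5, hsurj, h7, hadj⟩ := T.subdiv n
  obtain ⟨p, s, u, v, rfl, rfl⟩ := h
  obtain ⟨hc, hh, hg⟩ := hl
  have hphi : ∀ w : List (T.V (n + 1)),
      T.phi n w = compress (w.filterMap (fun z => (T.f n z).getLeft?)) := fun _ => rfl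
  have huv : (T.G (n + 1)).Adj u v := by
    have hinfix : List.Chain' (T.G (n + 1)).Adj [u, v] :=
      hc.infix ⟨p, [u] ++ s, by simp⟩
    exact List.isChain_pair.mp hinfix
  have hGs : (T.Gs n).Adj (T.f n u) (T.f n v) := T.f_simplicial n huv
  cases hfu : T.f n u with
  | inl a =>
    cases hfv : T.f n v with
    | inl w =>
      rw [hfu, hfv] at hGs
      exact absurd hGs (fun hcon => not_adj_inl_inl hint hadj (T.two_le_d n) hcon)
    | inr t =>
      have gu : (T.f n u).getLeft? = some a := by rw [hfu]; rfl
      have gv : (T.f n v).getLeft? = none := by rw [hfv]; rfl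
      have e1 : ((p ++ [u, v, u]) ++ s).filterMap (fun z => (T.f n z).getLeft?) =
          p.filterMap (fun z => (T.f n z).getLeft?) ++
            a :: a :: s.filterMap (fun z => (T.f n z).getLeft?) := by
        simp [List.filterMap_append, List.filterMap_cons, gu, gv]
      have e2 : ((p ++ [u]) ++ s).filterMap (fun z => (T.f n z).getLeft?) =
          p.filterMap (fun z => (T.f n z).getLeft?) ++
            a :: s.filterMap (fun z => (T.f n z).getLeft?) := by
        simp [List.filterMap_append, List.filterMap_cons, gu]
      rw [hphi, hphi, e1, e2, compress_dd]
  | inr s₁ =>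
    cases hfv : T.f n v with
    | inr t =>
      have gu : (T.f n u).getLeft? = none := by rw [hfu]; rfl
      have gv : (T.f n v).getLeft? = none := by rw [hfv]; rfl
      rw [hphi, hphi]
      congr 1
      simp [List.filterMap_append, List.filterMap_cons, gu, gv]
    | inl w =>
      have gu : (T.f n u).getLeft? = none := by rw [hfu]; rfl
      have gv : (T.f n v).getLeft? = some w := by rw [hfv]; rfl
      have hp : p ≠ [] := by
        rintro rfl
        simp only [List.nil_append, List.cons_append, List.head?_cons, Option.some_inj] at hh
        rw [hh, T.f_base n] at hfu
        cases hfu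
      have hs : s ≠ [] := by
        rintro rfl
        rw [List.append_nil, show p ++ [u, v, u] = (p ++ [u, v]) ++ [u] by simp,
          List.getLast?_concat, Option.some_inj] at hg
        rw [hg, T.f_base n] at hfu
        cases hfu
      have hheadp : p.head? = some (T.x (n + 1)) := by
        rwa [List.append_assoc, List.head?_append_of_ne_nil _ hp] at hh
      have hxin : T.x (n + 1) ∈ p := List.mem_of_mem_head? (Option.mem_def.mpr hheadp)
      have hA : p.filterMap (fun z => (T.f n z).getLeft?) ≠ [] := by
        intro hnil
        have hcon := List.filterMap_eq_nil_iff.mp hnil _ hxin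
        rw [T.f_base n] at hcon
        simp at hcon
      have hlasts : s.getLast? = some (T.x (n + 1)) := by
        rwa [List.getLast?_append_of_ne_nil _ hs] at hg
      have hxin' : T.x (n + 1) ∈ s := List.mem_of_mem_getLast? (Option.mem_def.mpr hlasts)
      have hB : s.filterMap (fun z => (T.f n z).getLeft?) ≠ [] := by
        intro hnil
        have hcon := List.filterMap_eq_nil_iff.mp hnil _ hxin'
        rw [T.f_base n] at hcon
        simp at hcon
      obtain ⟨p₁, a₀, p₂, a, rfl, ha₀, hp₂, hAeq⟩ := exists_last_some hA
      obtain ⟨s₃, b₀, s₄, a', rfl, hb₀, hs₃, hBeq⟩ := exists_head_some hB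
      have hfa₀ : T.f n a₀ = Sum.inl a := Sum.getLeft?_eq_some_iff.mp ha₀
      have hfb₀ : T.f n b₀ = Sum.inl a' := Sum.getLeft?_eq_some_iff.mp hb₀
      obtain ⟨e, i, hPei, hi0, hid⟩ := interior_of_inr h0 hd hsurj s₁
      have hw : w = e.toProd.1 ∨ w = e.toProd.2 := by
        apply corridor h0 hd hint h5 h7 hadj [] e i hi0 hid w ?_ (by simp)
        rw [List.nil_append]
        refine List.isChain_pair.mpr ?_
        rw [hPei, ← hfu, ← hfv]
        exact hGs
      have hchA : List.Chain' (T.Gs n).Adj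
          (Sum.inl a :: (List.map (T.f n) p₂ ++ [Sum.inr s₁])) := by
        have h1 : List.Chain' (T.G (n + 1)).Adj (a₀ :: (p₂ ++ [u])) :=
          hc.infix ⟨p₁, [v, u] ++ (s₃ ++ b₀ :: s₄), by simp⟩
        have h2 := List.isChain_map_of_isChain (T.f n) (fun a b h => T.f_simplicial n h) h1
        simpa [List.Chain', hfa₀, hfu] using h2
      have hchA' : List.Chain' (T.Gs n).Adj
          (Sum.inr s₁ :: ((List.map (T.f n) p₂).reverse ++ [Sum.inl a])) := by
        have h3 : List.Chain' (flip (T.Gs n).Adj)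
            (Sum.inl a :: (List.map (T.f n) p₂ ++ [Sum.inr s₁])) :=
          hchA.imp fun _ _ h => h.symm
        have h4 := List.isChain_reverse.mpr h3
        simpa [List.Chain', flip] using h4
      have ha : a = e.toProd.1 ∨ a = e.toProd.2 := by
        apply corridor h0 hd hint h5 h7 hadj ((List.map (T.f n) p₂).reverse) e i hi0 hid a ?_ ?_
        · rw [← hPei] at hchA'
          exact hchA'
        · intro z hz
          simp only [List.mem_reverse, List.mem_map] at hz
          obtain ⟨z', hz', rfl⟩ := hz
          have hzn := hp₂ z' hz'
          cases hcase : T.f n z' with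
          | inl c => rw [hcase] at hzn; simp at hzn
          | inr t => exact ⟨t, rfl⟩
      have hchB : List.Chain' (T.Gs n).Adj
          (Sum.inr s₁ :: (List.map (T.f n) s₃ ++ [Sum.inl a'])) := by
        have h1 : List.Chain' (T.G (n + 1)).Adj (u :: (s₃ ++ [b₀])) :=
          hc.infix ⟨(p₁ ++ a₀ :: p₂) ++ [u, v], s₄, by simp⟩
        have h2 := List.isChain_map_of_isChain (T.f n) (fun a b h => T.f_simplicial n h) h1
        simpa [List.Chain', hfu, hfb₀] using h2
      have ha' : a' = e.toProd.1 ∨ a' = e.toProd.2 := by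
        apply corridor h0 hd hint h5 h7 hadj (List.map (T.f n) s₃) e i hi0 hid a' ?_ ?_
        · rw [← hPei] at hchB
          exact hchB
        · intro z hz
          simp only [List.mem_map] at hz
          obtain ⟨z', hz', rfl⟩ := hz
          have hzn := hs₃ z' hz'
          cases hcase : T.f n z' with
          | inl c => rw [hcase] at hzn; simp at hzn
          | inr t => exact ⟨t, rfl⟩
      have tri : a = w ∨ a' = w ∨ a = a' := by
        rcases hw with hw | hw <;> rcases ha with h1 | h1 <;> rcases ha' with h2 | h2 <;>
          first
            | exact Or.inl (h1.trans hw.symm)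
            | exact Or.inr (Or.inl (h2.trans hw.symm))
            | exact Or.inr (Or.inr (h1.trans h2.symm))
      have eL : ((p₁ ++ a₀ :: p₂) ++ [u, v, u] ++ (s₃ ++ b₀ :: s₄)).filterMap
          (fun z => (T.f n z).getLeft?) =
          (p₁.filterMap (fun z => (T.f n z).getLeft?) ++ [a]) ++
            w :: a' :: s₄.filterMap (fun z => (T.f n z).getLeft?) := by
        rw [List.filterMap_append, List.filterMap_append, hAeq, hBeq]
        simp [List.filterMap_cons, gu, gv]
      have eR : ((p₁ ++ a₀ :: p₂) ++ [u] ++ (s₃ ++ b₀ :: s₄)).filterMap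
          (fun z => (T.f n z).getLeft?) =
          (p₁.filterMap (fun z => (T.f n z).getLeft?) ++ [a]) ++
            a' :: s₄.filterMap (fun z => (T.f n z).getLeft?) := by
        rw [List.filterMap_append, List.filterMap_append, hAeq, hBeq]
        simp [List.filterMap_cons, gu]
      rw [hphi, hphi, eL, eR]
      set A1 := p₁.filterMap (fun z => (T.f n z).getLeft?) with hA1def
      set B1 := s₄.filterMap (fun z => (T.f n z).getLeft?) with hB1def
      by_cases haw : a = w
      · rw [← haw]
        congr 1
        rw [show (A1 ++ [a]) ++ a :: a' :: B1 = A1 ++ a :: a :: a' :: B1 by simp,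
          show (A1 ++ [a]) ++ a' :: B1 = A1 ++ a :: a' :: B1 by simp]
        exact compress_dd _ _ _
      · by_cases haw' : a' = w
        · rw [← haw']
          congr 1
          exact compress_dd _ _ _
        · have haa : a = a' := by
            rcases tri with h | h | h
            · exact absurd h haw
            · exact absurd h haw'
            · exact h
          rw [← haa]
          obtain ⟨Tt, hT⟩ := compress_cons a B1
          obtain ⟨K, hK⟩ := compress_concat A1 a
          have cL : compress ((A1 ++ [a]) ++ w :: a :: B1) = K ++ [a, w, a] ++ Tt := by
            rw [show (A1 ++ [a]) ++ w :: a :: B1 = A1 ++ a :: (w :: a :: B1) by simp,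
              compress_seam, compress_cons_ne haw, compress_cons_ne (fun h => haw h.symm),
              hT, hK]
            simp
          have cR : compress ((A1 ++ [a]) ++ a :: B1) = K ++ [a] ++ Tt := by
            rw [show (A1 ++ [a]) ++ a :: B1 = A1 ++ a :: (a :: B1) by simp,
              compress_seam, compress_cons_self, hT, hK]
            simp
          rw [cL, cR]
          exact reduce_eq_of_rtg (Relation.ReflTransGen.single ⟨K, Tt, a, w, rfl, rfl⟩)

/-- For every `n` and every `ω ∈ Ω_{n+1}`, `φ_n(ω)' = φ_n(ω')'`. -/
theorem statement_1 (T : GraphTower) (n : ℕ) (ω : List (T.V (n + 1)))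
    (hω : IsLoopWord (T.G (n + 1)) (T.x (n + 1)) ω) :
    reduce (T.phi n ω) = reduce (T.phi n (reduce ω)) := by
  have key : ∀ r : List (T.V (n + 1)), Relation.ReflTransGen ReduceStep ω r →
      reduce (T.phi n ω) = reduce (T.phi n r) := by
    intro r h
    induction h with
    | refl => rfl
    | tail hlr hstep ih =>
      rw [ih, step_proj T n (loopword_rtg hω hlr) hstep]
  exact key (reduce ω) (reduce_spec ω).1


end GCG
end
end

section
/- For every n and all loop words ω, ξ ∈ Ω_{n+1}, one has φ_n(ωξ) = φ_n(ω)φ_n(ξ); that is, the projection φ_n = DRC_n is compatible with concatenation of loop words. -/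
open Classical
noncomputable section

namespace GCG

lemma compress_ne_nil {V : Type*} (a : V) (l : List V) : compress (a :: l) ≠ [] := by
  induction l generalizing a with
  | nil => simp [compress]
  | cons b t ih =>
    rw [compress]
    split
    · exact ih b
    · simp

lemma compress_splice {V : Type*} (A : List V) (x : V) (B : List V) :
    compress (A ++ x :: B) = (compress (A ++ [x])).dropLast ++ compress (x :: B) := by
  induction A with
  | nil => simp [compress]
  | cons a A' ih =>
    cases A' with
    | nil =>
      simp only [List.nil_append, List.cons_append]
      rw [compress, compress]
      split
      · simp [compress]
      · simp [compress]
    | cons b A'' =>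
      simp only [List.cons_append] at ih ⊢
      rw [compress, compress]
      split
      · exact ih
      · rw [ih]
        obtain ⟨c, L, hcL⟩ := List.exists_cons_of_ne_nil
          (compress_ne_nil b (A'' ++ [x]))
        rw [hcL]
        simp

/-- For every `n` and all loop words `ω, ξ ∈ Ω_{n+1}`,
`φ_n(ωξ) = φ_n(ω)φ_n(ξ)`. -/
theorem statement_6 (T : GraphTower) (n : ℕ) (ω ξ : List (T.V (n + 1)))
    (hω : IsLoopWord (T.G (n + 1)) (T.x (n + 1)) ω)
    (hξ : IsLoopWord (T.G (n + 1)) (T.x (n + 1)) ξ) :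
    T.phi n (lconcat ω ξ) = lconcat (T.phi n ω) (T.phi n ξ) := by
  obtain ⟨-, -, hωl⟩ := hω
  obtain ⟨-, hξh, -⟩ := hξ
  cases ξ with
  | nil => simp at hξh
  | cons y t =>
    have hy : y = T.x (n + 1) := by simpa using hξh
    subst hy
    have hωne : ω ≠ [] := by
      intro h; subst h; simp at hωl
    have hlast : ω.getLast hωne = T.x (n + 1) := by
      rw [List.getLast?_eq_some_getLast hωne] at hωl
      exact Option.some.inj hωl
    have hdec : ω.dropLast ++ [T.x (n + 1)] = ω := by
      rw [← hlast]; exact List.dropLast_append_getLast hωne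
    have hgx : ((T.f n (T.x (n + 1))).getLeft?) = some (T.x n) := by
      rw [T.f_base]; rfl
    unfold GraphTower.phi DRC lconcat
    rw [← hdec]
    simp only [List.dropLast_concat, List.cons_append, List.append_assoc,
      List.filterMap_append, List.filterMap_cons, hgx, List.filterMap_nil]
    rw [compress_splice]

end GCG
end
end
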